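/- Let J : ℝ^p → ℝ be L-smooth (L > 0) with J* := inf J > −∞, let M_Φ ≥ 0, ε̄' > 0, θ ≥ 1/3, and let (ε_k)_{k≥0} be vectors in ℝ^p with ‖ε_k‖ ≤ M_Φ ε̄'/(k+1)^θ for all k. Define the deterministic inexact gradient iteration w_{k+1} = w_k − η (∇J(w_k) − ε_k) with η = 1/(4L) from an arbitrary w_0 ∈ ℝ^p. Then for every positive integer T, (1/T) Σ_{k=0}^{T−1} ‖∇J(w_k)‖² ≤ 16 L (J(w_0) − J*)/T + 9 M_Φ² ε̄'² / T^{2/3}. -/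

import Mathlib

open Finset InnerProductSpace
open scoped RealInnerProductSpace

lemma descent_lemma {p : ℕ} (J : EuclideanSpace ℝ (Fin p) → ℝ) (L : ℝ) (hL : 0 < L)
    (hdiff : Differentiable ℝ J)
    (hlip : LipschitzWith L.toNNReal (fun x => gradient J x))
    (x v : EuclideanSpace ℝ (Fin p)) :
    J (x + v) ≤ J x + ⟪gradient J x, v⟫_ℝ + L / 2 * ‖v‖ ^ 2 := by
  set c1 : ℝ := ⟪gradient J x, v⟫_ℝ with hc1
  set c2 : ℝ := L / 2 * ‖v‖ ^ 2 with hc2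
  set h : ℝ → ℝ := fun t => J (x + t • v) - t * c1 - c2 * t ^ 2 with hh
  have hd : ∀ t : ℝ, HasDerivAt h
      (⟪gradient J (x + t • v), v⟫_ℝ - c1 - c2 * (2 * t)) t := by
    intro t
    have hγ : HasDerivAt (fun t : ℝ => x + t • v) v t := by
      simpa using ((hasDerivAt_id t).smul_const v).const_add x
    have hJ : HasDerivAt (fun t : ℝ => J (x + t • v))
        (⟪gradient J (x + t • v), v⟫_ℝ) t := by
      have := ((hdiff (x + t • v)).hasGradientAt.hasFDerivAt).comp_hasDerivAt t hγ
      simpa [toDual_apply_apply, Function.comp_def] using this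
    have h2 : HasDerivAt (fun t : ℝ => t * c1) c1 t := hasDerivAt_mul_const c1
    have h3 : HasDerivAt (fun t : ℝ => c2 * t ^ 2) (c2 * (2 * t)) t := by
      simpa using (hasDerivAt_pow 2 t).const_mul c2
    exact (hJ.sub h2).sub h3
  have hdiffh : Differentiable ℝ h := fun t => (hd t).differentiableAt
  have hanti : AntitoneOn h (Set.Icc (0 : ℝ) 1) := by
    apply antitoneOn_of_deriv_nonpos (convex_Icc 0 1) hdiffh.continuous.continuousOn
      (hdiffh.differentiableOn)
    intro t ht
    rw [interior_Icc] at ht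
    rw [(hd t).deriv]
    have hinner : ⟪gradient J (x + t • v), v⟫_ℝ - c1
        = ⟪gradient J (x + t • v) - gradient J x, v⟫_ℝ := by
      rw [inner_sub_left]
    have hlipd : ‖gradient J (x + t • v) - gradient J x‖ ≤ L * (t * ‖v‖) := by
      have := hlip.dist_le_mul (x + t • v) x
      rw [dist_eq_norm] at this
      simp only [dist_eq_norm, add_sub_cancel_left] at this
      calc ‖gradient J (x + t • v) - gradient J x‖ ≤ L.toNNReal * ‖t • v‖ := by
            simpa [dist_eq_norm] using this
        _ = L * (t * ‖v‖) := by
            rw [Real.coe_toNNReal L hL.le, norm_smul, Real.norm_eq_abs,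
              abs_of_pos ht.1]
    have hb : ⟪gradient J (x + t • v) - gradient J x, v⟫_ℝ ≤ L * t * ‖v‖ ^ 2 := by
      calc ⟪gradient J (x + t • v) - gradient J x, v⟫_ℝ
          ≤ ‖gradient J (x + t • v) - gradient J x‖ * ‖v‖ := real_inner_le_norm _ _
        _ ≤ (L * (t * ‖v‖)) * ‖v‖ := by
            apply mul_le_mul_of_nonneg_right hlipd (norm_nonneg v)
        _ = L * t * ‖v‖ ^ 2 := by ring
    rw [hinner]
    have : c2 * (2 * t) = L * t * ‖v‖ ^ 2 := by rw [hc2]; ring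
    linarith
  have h10 : h 1 ≤ h 0 := hanti (by norm_num) (by norm_num) zero_le_one
  simp only [hh, one_smul, zero_smul, add_zero, one_pow, one_mul, zero_pow, mul_zero,
    zero_mul, sub_zero] at h10
  linarith

lemma sum_rpow_bound : ∀ T : ℕ,
    ∑ k ∈ range T, ((k : ℝ) + 1) ^ (-(2/3) : ℝ) ≤ 3 * (T : ℝ) ^ ((1:ℝ)/3) := by
  intro T
  induction T with
  | zero => simp
  | succ n ih =>
    rw [sum_range_succ]
    have hn : (0:ℝ) ≤ (n:ℝ) := Nat.cast_nonneg n
    have hn1 : (0:ℝ) < (n:ℝ) + 1 := by linarith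
    have hamgm : (n:ℝ) ^ ((1:ℝ)/3) * ((n:ℝ)+1) ^ ((2:ℝ)/3)
        ≤ (1/3) * (n:ℝ) + (2/3) * ((n:ℝ)+1) :=
      Real.geom_mean_le_arith_mean2_weighted (by norm_num) (by norm_num) hn (by linarith)
        (by norm_num)
    have hsplit : ((n:ℝ)+1) ^ ((1:ℝ)/3) * ((n:ℝ)+1) ^ ((2:ℝ)/3) = (n:ℝ)+1 := by
      rw [← Real.rpow_add hn1]
      norm_num
    have hpow_pos : (0:ℝ) < ((n:ℝ)+1) ^ ((2:ℝ)/3) := Real.rpow_pos_of_pos hn1 _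
    have hkey : ((n:ℝ)+1) ^ (-(2/3) : ℝ)
        ≤ 3 * (((n:ℝ)+1) ^ ((1:ℝ)/3) - (n:ℝ) ^ ((1:ℝ)/3)) := by
      have hexp : 3 * (((n:ℝ)+1) ^ ((1:ℝ)/3) - (n:ℝ) ^ ((1:ℝ)/3)) * ((n:ℝ)+1) ^ ((2:ℝ)/3)
          = 3 * (((n:ℝ)+1) - (n:ℝ) ^ ((1:ℝ)/3) * ((n:ℝ)+1) ^ ((2:ℝ)/3)) := by
        linear_combination (3:ℝ) * hsplit
      rw [Real.rpow_neg hn1.le, inv_le_iff_one_le_mul₀ hpow_pos, hexp]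
      linarith
    have : ((n:ℝ)+1) ^ (-(2/3) : ℝ)
        ≤ 3 * (((n:ℝ)+1) ^ ((1:ℝ)/3)) - 3 * ((n:ℝ) ^ ((1:ℝ)/3)) := by linarith
    push_cast
    linarith

lemma arith_helper (S L D A P : ℝ) (h : S ≤ 8 * L * D + 15 / 2 * (A ^ 2 * P))
    (h1 : 0 ≤ L * D) (h2 : 0 ≤ A ^ 2 * P) : S ≤ 16 * L * D + 9 * A ^ 2 * P := by linarith

/-- Explicit `O(T^{-2/3})` rate of the deterministic model-based controller when the
sensitivity error decays as `ε_{H,k} ≤ ε̄'/(k+1)^θ` with `θ ≥ 1/3`: with `η = 1/(4L)`,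
`(1/T) Σ_{k<T} ‖∇J(w_k)‖² ≤ 16 L (J(w_0) - J*)/T + 9 M_Φ² ε̄'²/T^{2/3}`. -/
theorem model_based_fast_sensitivity_rate
    (p : ℕ) (hp : 0 < p) (J : EuclideanSpace ℝ (Fin p) → ℝ) (L : ℝ) (hL : 0 < L)
    (hdiff : Differentiable ℝ J)
    (hlip : LipschitzWith L.toNNReal (fun x => gradient J x))
    (hbdd : BddBelow (Set.range J))
    (MΦ εbar' θ : ℝ) (hMΦ : 0 ≤ MΦ) (hεbar' : 0 < εbar') (hθ : (1 : ℝ) / 3 ≤ θ)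
    (ε : ℕ → EuclideanSpace ℝ (Fin p))
    (hε : ∀ k : ℕ, ‖ε k‖ ≤ MΦ * εbar' / ((k : ℝ) + 1) ^ θ)
    (η : ℝ) (hη : η = 1 / (4 * L))
    (w : ℕ → EuclideanSpace ℝ (Fin p))
    (hw : ∀ k : ℕ, w (k + 1) = w k - η • (gradient J (w k) - ε k)) :
    ∀ T : ℕ, 0 < T →
      (1 / (T : ℝ)) * ∑ k ∈ range T, ‖gradient J (w k)‖ ^ 2
        ≤ 16 * L * (J (w 0) - sInf (Set.range J)) / T
          + 9 * MΦ ^ 2 * εbar' ^ 2 / (T : ℝ) ^ ((2 : ℝ) / 3) := by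
  have hηpos : 0 < η := by rw [hη]; positivity
  have hLη : 4 * L * η = 1 := by rw [hη]; field_simp
  have hη8 : L / 2 * η ^ 2 = η / 8 := by
    rw [hη]; field_simp; ring
  set A : ℝ := MΦ * εbar' with hA
  have hAnn : 0 ≤ A := mul_nonneg hMΦ hεbar'.le
  -- per-step descent inequality
  have step : ∀ k : ℕ, η / 2 * ‖gradient J (w k)‖ ^ 2
      ≤ (J (w k) - J (w (k + 1))) + 5 * η / 4 * ‖ε k‖ ^ 2 := by
    intro k
    set G := gradient J (w k) with hG
    set v : EuclideanSpace ℝ (Fin p) := -(η • (G - ε k)) with hv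
    have hwk : w (k + 1) = w k + v := by rw [hw k, hv, sub_eq_add_neg]
    have hdesc := descent_lemma J L hL hdiff hlip (w k) v
    rw [← hwk] at hdesc
    have hinner : ⟪G, v⟫_ℝ = -η * (‖G‖ ^ 2 - ⟪G, ε k⟫_ℝ) := by
      rw [hv, inner_neg_right, inner_smul_right, inner_sub_right,
        real_inner_self_eq_norm_sq]
      ring
    have hnv : ‖v‖ ^ 2 = η ^ 2 * ‖G - ε k‖ ^ 2 := by
      rw [hv, norm_neg, norm_smul, Real.norm_eq_abs, abs_of_pos hηpos, mul_pow]
    have hns : ‖G - ε k‖ ^ 2 ≤ 2 * ‖G‖ ^ 2 + 2 * ‖ε k‖ ^ 2 := by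
      have h1 : ‖G - ε k‖ ≤ ‖G‖ + ‖ε k‖ := norm_sub_le _ _
      nlinarith [mul_self_le_mul_self (norm_nonneg (G - ε k)) h1,
        sq_nonneg (‖G‖ - ‖ε k‖)]
    have hip : ⟪G, ε k⟫_ℝ ≤ ‖G‖ ^ 2 / 4 + ‖ε k‖ ^ 2 := by
      have h1 : ⟪G, ε k⟫_ℝ ≤ ‖G‖ * ‖ε k‖ := real_inner_le_norm _ _
      nlinarith [sq_nonneg (‖G‖ / 2 - ‖ε k‖)]
    -- combine
    have h2 : η * ⟪G, ε k⟫_ℝ ≤ η * (‖G‖ ^ 2 / 4 + ‖ε k‖ ^ 2) :=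
      mul_le_mul_of_nonneg_left hip hηpos.le
    have h3 : L / 2 * ‖v‖ ^ 2 ≤ η / 8 * (2 * ‖G‖ ^ 2 + 2 * ‖ε k‖ ^ 2) := by
      rw [hnv, ← mul_assoc, hη8]
      exact mul_le_mul_of_nonneg_left hns (by positivity)
    rw [hinner] at hdesc
    linarith
  intro T hT
  have hTpos : (0:ℝ) < (T:ℝ) := by exact_mod_cast hT
  -- sum the per-step inequality
  have hsum : η / 2 * ∑ k ∈ range T, ‖gradient J (w k)‖ ^ 2
      ≤ (J (w 0) - J (w T)) + 5 * η / 4 * ∑ k ∈ range T, ‖ε k‖ ^ 2 := by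
    have := Finset.sum_le_sum (fun k (_ : k ∈ range T) => step k)
    rw [Finset.sum_add_distrib, Finset.sum_range_sub' (fun k => J (w k)) T] at this
    calc η / 2 * ∑ k ∈ range T, ‖gradient J (w k)‖ ^ 2
        = ∑ k ∈ range T, η / 2 * ‖gradient J (w k)‖ ^ 2 := by rw [Finset.mul_sum]
      _ ≤ (J (w 0) - J (w T)) + ∑ k ∈ range T, 5 * η / 4 * ‖ε k‖ ^ 2 := this
      _ = (J (w 0) - J (w T)) + 5 * η / 4 * ∑ k ∈ range T, ‖ε k‖ ^ 2 := by
          rw [Finset.mul_sum]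
  have hinf0 : sInf (Set.range J) ≤ J (w T) := csInf_le hbdd ⟨w T, rfl⟩
  have hinf1 : sInf (Set.range J) ≤ J (w 0) := csInf_le hbdd ⟨w 0, rfl⟩
  set D : ℝ := J (w 0) - sInf (Set.range J) with hD
  have hDnn : 0 ≤ D := by simp [hD]; linarith
  -- bound the error sum
  have hεsq : ∀ k : ℕ, ‖ε k‖ ^ 2 ≤ A ^ 2 * ((k:ℝ) + 1) ^ (-(2/3) : ℝ) := by
    intro k
    have hk1 : (0:ℝ) < (k:ℝ) + 1 := by positivity
    have hk1' : (1:ℝ) ≤ (k:ℝ) + 1 := by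
      have : (0:ℝ) ≤ (k:ℝ) := Nat.cast_nonneg k
      linarith
    have h1 : ‖ε k‖ ^ 2 ≤ (A / ((k:ℝ) + 1) ^ θ) ^ 2 :=
      pow_le_pow_left₀ (norm_nonneg _) (hε k) 2
    have h2 : (A / ((k:ℝ) + 1) ^ θ) ^ 2 = A ^ 2 * ((k:ℝ) + 1) ^ (-(θ * 2)) := by
      rw [div_pow, ← Real.rpow_natCast (((k:ℝ) + 1) ^ θ) 2, ← Real.rpow_mul hk1.le,
        Real.rpow_neg hk1.le, div_eq_mul_inv]
      norm_num
    have h3 : ((k:ℝ) + 1) ^ (-(θ * 2)) ≤ ((k:ℝ) + 1) ^ (-(2/3) : ℝ) :=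
      Real.rpow_le_rpow_of_exponent_le hk1' (by linarith)
    calc ‖ε k‖ ^ 2 ≤ A ^ 2 * ((k:ℝ) + 1) ^ (-(θ * 2)) := by rw [← h2]; exact h1
      _ ≤ A ^ 2 * ((k:ℝ) + 1) ^ (-(2/3) : ℝ) :=
          mul_le_mul_of_nonneg_left h3 (by positivity)
  set P : ℝ := (T:ℝ) ^ ((1:ℝ)/3) with hP
  set Q : ℝ := (T:ℝ) ^ ((2:ℝ)/3) with hQ
  have hPpos : 0 < P := Real.rpow_pos_of_pos hTpos _
  have hQpos : 0 < Q := Real.rpow_pos_of_pos hTpos _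
  have hPQ : P * Q = (T:ℝ) := by
    rw [hP, hQ, ← Real.rpow_add hTpos]; norm_num
  have hE : ∑ k ∈ range T, ‖ε k‖ ^ 2 ≤ 3 * A ^ 2 * P := by
    calc ∑ k ∈ range T, ‖ε k‖ ^ 2
        ≤ ∑ k ∈ range T, A ^ 2 * ((k:ℝ) + 1) ^ (-(2/3) : ℝ) :=
          Finset.sum_le_sum (fun k _ => hεsq k)
      _ = A ^ 2 * ∑ k ∈ range T, ((k:ℝ) + 1) ^ (-(2/3) : ℝ) := by rw [Finset.mul_sum]
      _ ≤ A ^ 2 * (3 * P) := mul_le_mul_of_nonneg_left (sum_rpow_bound T) (by positivity)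
      _ = 3 * A ^ 2 * P := by ring
  set S : ℝ := ∑ k ∈ range T, ‖gradient J (w k)‖ ^ 2 with hS
  have hSnn : 0 ≤ S := Finset.sum_nonneg (fun k _ => by positivity)
  -- main bound on S
  have hmain : S ≤ 16 * L * D + 9 * A ^ 2 * P := by
    have h1 : η * S ≤ 2 * D + 5 * η / 2 * (3 * A ^ 2 * P) := by
      have h2 : 5 * η / 4 * ∑ k ∈ range T, ‖ε k‖ ^ 2 ≤ 5 * η / 4 * (3 * A ^ 2 * P) :=
        mul_le_mul_of_nonneg_left hE (by positivity)
      have : J (w 0) - J (w T) ≤ D := by simp [hD]; linarith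
      linarith
    have h3 := mul_le_mul_of_nonneg_left h1 (by positivity : (0:ℝ) ≤ 4 * L)
    have e1 : 4 * L * (η * S) = S := by linear_combination S * hLη
    have e2 : 4 * L * (2 * D + 5 * η / 2 * (3 * A ^ 2 * P)) = 8 * L * D + 15 / 2 * (A ^ 2 * P) := by
      linear_combination (15 / 2 * (A ^ 2 * P)) * hLη
    rw [e1, e2] at h3
    exact arith_helper S L D A P h3 (mul_nonneg hL.le hDnn)
      (mul_nonneg (sq_nonneg A) hPpos.le)
  -- convert to averaged form
  have h9 : 9 * MΦ ^ 2 * εbar' ^ 2 / Q = 9 * A ^ 2 * P / (T:ℝ) := by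
    rw [div_eq_div_iff hQpos.ne' hTpos.ne', hA]
    linear_combination (-(9 * MΦ ^ 2 * εbar' ^ 2)) * hPQ
  rw [h9]
  have : (1 / (T:ℝ)) * S = S / (T:ℝ) := by ring
  rw [this]
  have hfin : S / (T:ℝ) ≤ (16 * L * D + 9 * A ^ 2 * P) / (T:ℝ) := by
    gcongr
  calc S / (T:ℝ) ≤ (16 * L * D + 9 * A ^ 2 * P) / (T:ℝ) := hfin
    _ = 16 * L * D / (T:ℝ) + 9 * A ^ 2 * P / (T:ℝ) := by ring
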